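/- Let G be a simple graph on a vertex set of size p whose maximum degree is at most K, where K ≥ 1. Then for every integer m ≥ 1: (a) for any fixed vertex v, the number of vertex subsets S with v ∈ S, |S| = m, and the induced subgraph G[S] connected is at most (eK)^m; and (b) the total number of vertex subsets S with |S| = m and G[S] connected is at most p·(eK)^m, where e is Euler's number. -/

import Mathlib

open SimpleGraph

section AuxAnalytic

lemma succ_pow_le_exp_mul_aux0 (r : ℕ) (hr : 1 ≤ r) :
    ((r : ℝ) + 1) ^ r ≤ Real.exp 1 * (r : ℝ) ^ r := by
  have hr0 : (0:ℝ) < r := by exact_mod_cast hr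
  have h1 : (r : ℝ) + 1 ≤ (r : ℝ) * Real.exp (1 / r) := by
    have := Real.add_one_le_exp (1 / (r:ℝ))
    calc (r:ℝ) + 1 = (r:ℝ) * (1/(r:ℝ) + 1) := by field_simp; ring
    _ ≤ (r:ℝ) * Real.exp (1/(r:ℝ)) := by nlinarith
  calc ((r:ℝ)+1)^r ≤ ((r:ℝ) * Real.exp (1/r))^r := by
        apply pow_le_pow_left₀ (by positivity) h1
    _ = (r:ℝ)^r * Real.exp 1 := by
        rw [mul_pow, ← Real.exp_nat_mul]
        congr 2
        field_simp
    _ = Real.exp 1 * (r:ℝ)^r := by ring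

lemma pow_le_exp_pow_mul_factorial_aux0 (k : ℕ) :
    (k : ℝ) ^ k ≤ Real.exp 1 ^ k * (k.factorial : ℝ) := by
  induction k with
  | zero => simp
  | succ k ih =>
    rcases Nat.eq_zero_or_pos k with rfl | hk
    · norm_num [Nat.factorial]
    · have h3 := succ_pow_le_exp_mul_aux0 k hk
      have he : (0:ℝ) < Real.exp 1 := Real.exp_pos 1
      have hkf : (0:ℝ) < (k.factorial : ℝ) := by exact_mod_cast k.factorial_pos
      have hfac : ((k+1).factorial : ℝ) = ((k:ℝ)+1) * k.factorial := by
        rw [Nat.factorial_succ]; push_cast; ring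
      have hsplit : ((k:ℝ)+1)^(k+1) = ((k:ℝ)+1) * ((k:ℝ)+1)^k := by ring
      push_cast
      rw [hsplit]
      calc ((k:ℝ)+1) * ((k:ℝ)+1)^k ≤ ((k:ℝ)+1) * (Real.exp 1 * (k:ℝ)^k) := by gcongr
        _ ≤ ((k:ℝ)+1) * (Real.exp 1 * (Real.exp 1 ^ k * k.factorial)) := by gcongr
        _ = Real.exp 1 ^ (k+1) * (((k:ℝ)+1) * k.factorial) := by ring
        _ = Real.exp 1 ^ (k+1) * ((k+1).factorial : ℝ) := by rw [hfac]

lemma choose_le_exp_mul_pow_aux0 (m K : ℕ) (hm : 1 ≤ m) (hK : 1 ≤ K) :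
    (((m * K).choose (m-1) : ℕ) : ℝ) ≤ (Real.exp 1 * K) ^ m := by
  have he1 : (1:ℝ) ≤ Real.exp 1 := by nlinarith [Real.exp_one_gt_d9]
  have hK1 : (1:ℝ) ≤ (K:ℝ) := by exact_mod_cast hK
  obtain ⟨r, rfl⟩ : ∃ r, m = r + 1 := ⟨m - 1, by omega⟩
  simp only [Nat.add_sub_cancel]
  rcases Nat.eq_zero_or_pos r with rfl | hr
  · simp
    nlinarith
  · have h1 : (((r+1) * K).choose r : ℝ) * r.factorial ≤ (((r:ℝ)+1) * K) ^ r := by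
      have hnat : ((r+1)*K).choose r * r.factorial ≤ ((r+1)*K)^r := by
        calc ((r+1)*K).choose r * r.factorial = r.factorial * ((r+1)*K).choose r := by ring
        _ = ((r+1)*K).descFactorial r := (Nat.descFactorial_eq_factorial_mul_choose _ _).symm
        _ ≤ ((r+1)*K)^r := Nat.descFactorial_le_pow _ _
      calc (((r+1) * K).choose r : ℝ) * r.factorial
          = ((((r+1)*K).choose r * r.factorial : ℕ) : ℝ) := by push_cast; ring
        _ ≤ ((((r+1)*K)^r : ℕ) : ℝ) := by exact_mod_cast hnat
        _ = (((r:ℝ)+1) * K)^r := by push_cast; ring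
    have h3 := succ_pow_le_exp_mul_aux0 r hr
    have h2 := pow_le_exp_pow_mul_factorial_aux0 r
    have hkf : (0:ℝ) < (r.factorial : ℝ) := by exact_mod_cast r.factorial_pos
    have he : (0:ℝ) < Real.exp 1 := Real.exp_pos 1
    have key : (((r+1) * K).choose r : ℝ) * r.factorial ≤
        (Real.exp 1 ^ (r+1) * (K:ℝ)^(r+1)) * r.factorial := by
      calc (((r+1) * K).choose r : ℝ) * r.factorial ≤ (((r:ℝ)+1) * K) ^ r := h1
        _ = ((r:ℝ)+1)^r * (K:ℝ)^r := by rw [mul_pow]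
        _ ≤ (Real.exp 1 * (r:ℝ)^r) * (K:ℝ)^r := by gcongr
        _ ≤ (Real.exp 1 * (Real.exp 1 ^ r * r.factorial)) * (K:ℝ)^r := by gcongr
        _ = (Real.exp 1 ^ (r+1) * (K:ℝ)^r) * r.factorial := by ring
        _ ≤ (Real.exp 1 ^ (r+1) * (K:ℝ)^(r+1)) * r.factorial := by
            apply mul_le_mul_of_nonneg_right _ (le_of_lt hkf)
            apply mul_le_mul_of_nonneg_left (pow_le_pow_right₀ hK1 (Nat.le_succ r)) (by positivity)
    have hfin : (((r+1) * K).choose r : ℝ) ≤ Real.exp 1 ^ (r+1) * (K:ℝ)^(r+1) :=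
      le_of_mul_le_mul_right key hkf
    calc (((r+1) * K).choose r : ℝ) ≤ Real.exp 1 ^ (r+1) * (K:ℝ)^(r+1) := hfin
      _ = (Real.exp 1 * K)^(r+1) := by rw [mul_pow]

end AuxAnalytic

section AuxCode

lemma list_lt_concat_aux0 {K : ℕ} (l : List (Fin K)) (a : Fin K) : l < l ++ [a] := by
  induction l with
  | nil => exact List.nil_lt_cons a []
  | cons b t ih => exact List.Lex.cons ih

lemma list_nil_le_aux0 {K : ℕ} (l : List (Fin K)) : [] ≤ l := by
  cases l with
  | nil => exact le_refl _
  | cons b t => exact le_of_lt (List.nil_lt_cons b t)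

def DownClosedAux0 {K : ℕ} (A : Finset (List (Fin K))) : Prop := ∀ l ∈ A, l.dropLast ∈ A

def codeOfAux0 (m K : ℕ) (A : Finset (List (Fin K))) : Finset (Fin m × Fin K) :=
  Finset.univ.filter (fun q => (A.sort (· ≤ ·)).getD q.1 [] ++ [q.2] ∈ A)

variable {m K : ℕ} {A B : Finset (List (Fin K))}

lemma sortA_len_aux0 (hA : A.card = m) : (A.sort (· ≤ ·)).length = m := by
  rw [Finset.length_sort]; exact hA

lemma getD_mem_aux0 (hA : A.card = m) {i : ℕ} (hi : i < m) :
    (A.sort (· ≤ ·)).getD i [] ∈ A := by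
  rw [List.getD_eq_getElem _ _ (by rw [sortA_len_aux0 hA]; exact hi)]
  exact (Finset.mem_sort _).1 (List.getElem_mem _)

lemma getD_strictMono_aux0 (hA : A.card = m) {i j : ℕ} (hij : i < j) (hj : j < m) :
    (A.sort (· ≤ ·)).getD i [] < (A.sort (· ≤ ·)).getD j [] := by
  have hi' : i < (A.sort (· ≤ ·)).length := by rw [sortA_len_aux0 hA]; omega
  have hj' : j < (A.sort (· ≤ ·)).length := by rw [sortA_len_aux0 hA]; exact hj
  rw [List.getD_eq_getElem _ _ hi', List.getD_eq_getElem _ _ hj']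
  exact (Finset.sortedLT_sort A).getElem_lt_getElem_iff.2 hij

lemma getD_mono_aux0 (hA : A.card = m) {i j : ℕ} (hij : i ≤ j) (hj : j < m) :
    (A.sort (· ≤ ·)).getD i [] ≤ (A.sort (· ≤ ·)).getD j [] := by
  rcases eq_or_lt_of_le hij with rfl | h
  · exact le_refl _
  · exact le_of_lt (getD_strictMono_aux0 hA h hj)

lemma getD_surj_aux0 (hA : A.card = m) {l : List (Fin K)} (hl : l ∈ A) :
    ∃ i, i < m ∧ (A.sort (· ≤ ·)).getD i [] = l := by
  have : l ∈ A.sort (· ≤ ·) := (Finset.mem_sort _).2 hl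
  obtain ⟨i, hi, he⟩ := List.getElem_of_mem this
  exact ⟨i, by rw [sortA_len_aux0 hA] at hi; exact hi,
    by rw [List.getD_eq_getElem _ _ hi]; exact he⟩

lemma nil_mem_of_downClosed_aux0 (hd : DownClosedAux0 A) (hne : A.Nonempty) :
    ([] : List (Fin K)) ∈ A := by
  obtain ⟨l, hl⟩ := hne
  have key : ∀ n (l : List (Fin K)), l.length ≤ n → l ∈ A → ([] : List (Fin K)) ∈ A := by
    intro n
    induction n with
    | zero =>
      intro l hlen hl
      cases l with
      | nil => exact hl
      | cons a t => simp at hlen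
    | succ n ih =>
      intro l hlen hl
      cases l with
      | nil => exact hl
      | cons a t =>
        refine ih (a :: t).dropLast ?_ (hd _ hl)
        have : (a :: t).dropLast.length = t.length := by simp
        rw [this]
        simpa using hlen
  exact key l.length l (le_refl _) hl

lemma getD_zero_aux0 (hA : A.card = m) (hm : 0 < m) (hd : DownClosedAux0 A) :
    (A.sort (· ≤ ·)).getD 0 [] = [] := by
  have hne : A.Nonempty := Finset.card_pos.1 (hA ▸ hm)
  obtain ⟨k, hk, he⟩ := getD_surj_aux0 hA (nil_mem_of_downClosed_aux0 hd hne)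
  refine le_antisymm ?_ (list_nil_le_aux0 _)
  calc (A.sort (· ≤ ·)).getD 0 []
      ≤ (A.sort (· ≤ ·)).getD k [] := getD_mono_aux0 hA (Nat.zero_le _) hk
    _ = [] := he

lemma dropLast_lt_aux0 {K : ℕ} {l : List (Fin K)} (h : l ≠ []) : l.dropLast < l := by
  conv_rhs => rw [← List.dropLast_append_getLast h]
  exact list_lt_concat_aux0 _ _

lemma code_le_side_aux0 (hA : A.card = m) (hB : B.card = m)
    (hdA : DownClosedAux0 A) (hdB : DownClosedAux0 B)
    (hcode : codeOfAux0 m K A = codeOfAux0 m K B)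
    {i : ℕ} (hi : i < m)
    (IH : ∀ s, s < i → (A.sort (· ≤ ·)).getD s [] = (B.sort (· ≤ ·)).getD s []) :
    (B.sort (· ≤ ·)).getD i [] ≤ (A.sort (· ≤ ·)).getD i [] := by
  rcases Nat.eq_zero_or_pos i with rfl | hipos
  · rw [getD_zero_aux0 hA hi hdA, getD_zero_aux0 hB hi hdB]
  · set l := (A.sort (· ≤ ·)).getD i [] with hl
    have hlA : l ∈ A := getD_mem_aux0 hA hi
    have hlne : l ≠ [] := by
      intro h
      have h0 := getD_zero_aux0 hA (lt_of_le_of_lt (Nat.zero_le _) hi) hdA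
      have hlt := getD_strictMono_aux0 hA hipos hi
      rw [h0, ← hl, h] at hlt
      exact absurd hlt (lt_irrefl _)
    have hpA : l.dropLast ∈ A := hdA l hlA
    obtain ⟨s, hs, hse⟩ := getD_surj_aux0 hA hpA
    have hslt : s < i := by
      by_contra hcon
      push_neg at hcon
      have h1 : l ≤ (A.sort (· ≤ ·)).getD s [] := getD_mono_aux0 hA hcon hs
      rw [hse] at h1
      exact absurd (lt_of_le_of_lt h1 (dropLast_lt_aux0 hlne)) (lt_irrefl _)
    have hq : ((⟨s, lt_trans hslt hi⟩ : Fin m), l.getLast hlne) ∈ codeOfAux0 m K A := by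
      simp only [codeOfAux0, Finset.mem_filter, Finset.mem_univ, true_and]
      show (A.sort (· ≤ ·)).getD s [] ++ [l.getLast hlne] ∈ A
      rw [hse, List.dropLast_append_getLast hlne]
      exact hlA
    rw [hcode] at hq
    simp only [codeOfAux0, Finset.mem_filter, Finset.mem_univ, true_and] at hq
    have hq' : l ∈ B := by
      have : (B.sort (· ≤ ·)).getD s [] ++ [l.getLast hlne] ∈ B := hq
      rwa [← IH s hslt, hse, List.dropLast_append_getLast hlne] at this
    obtain ⟨r, hr, hre⟩ := getD_surj_aux0 hB hq'
    have hir : i ≤ r := by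
      by_contra hcon
      push_neg at hcon
      have heq := IH r hcon
      rw [← heq] at hre
      have hlt := getD_strictMono_aux0 hA hcon hi
      rw [hre, ← hl] at hlt
      exact lt_irrefl _ hlt
    calc (B.sort (· ≤ ·)).getD i []
        ≤ (B.sort (· ≤ ·)).getD r [] := getD_mono_aux0 hB hir hr
      _ = l := hre

lemma codeOf_inj_aux0 (hA : A.card = m) (hB : B.card = m)
    (hdA : DownClosedAux0 A) (hdB : DownClosedAux0 B)
    (hcode : codeOfAux0 m K A = codeOfAux0 m K B) : A = B := by
  have main : ∀ i, i < m → (A.sort (· ≤ ·)).getD i [] = (B.sort (· ≤ ·)).getD i [] := by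
    intro i
    induction i using Nat.strong_induction_on with
    | _ i ih =>
      intro hi
      have IH : ∀ s, s < i → (A.sort (· ≤ ·)).getD s [] = (B.sort (· ≤ ·)).getD s [] :=
        fun s hs => ih s hs (lt_trans hs hi)
      exact le_antisymm
        (code_le_side_aux0 hB hA hdB hdA hcode.symm hi (fun s hs => (IH s hs).symm))
        (code_le_side_aux0 hA hB hdA hdB hcode hi IH)
  have hlist : A.sort (· ≤ ·) = B.sort (· ≤ ·) := by
    apply List.ext_getElem (by rw [sortA_len_aux0 hA, sortA_len_aux0 hB])
    intro i h1 h2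
    have hi : i < m := by rw [sortA_len_aux0 hA] at h1; exact h1
    have := main i hi
    rwa [List.getD_eq_getElem _ _ h1, List.getD_eq_getElem _ _ h2] at this
  calc A = (A.sort (· ≤ ·)).toFinset := (Finset.sort_toFinset _ _).symm
    _ = (B.sort (· ≤ ·)).toFinset := by rw [hlist]
    _ = B := Finset.sort_toFinset _ _

lemma codeOf_card_aux0 (hA : A.card = m) (hdA : DownClosedAux0 A) (hm : 0 < m) :
    (codeOfAux0 m K A).card = m - 1 := by
  have hne : A.Nonempty := Finset.card_pos.1 (hA ▸ hm)
  have hnil : ([] : List (Fin K)) ∈ A := nil_mem_of_downClosed_aux0 hdA hne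
  have hbij : (codeOfAux0 m K A).card = (A.erase []).card := by
    apply Finset.card_bij (fun q _ => (A.sort (· ≤ ·)).getD q.1 [] ++ [q.2])
    · intro q hq
      simp only [codeOfAux0, Finset.mem_filter, Finset.mem_univ, true_and] at hq
      exact Finset.mem_erase.2 ⟨by simp, hq⟩
    · intro q hq q' hq' he
      obtain ⟨h1, h2⟩ := List.append_inj' he rfl
      have hq2 : q.2 = q'.2 := by simpa using h2
      have hq1 : q.1 = q'.1 := by
        by_contra hne'
        rcases lt_or_gt_of_ne hne' with h | h
        · exact absurd h1 (ne_of_lt (getD_strictMono_aux0 hA h q'.1.isLt))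
        · exact absurd h1.symm (ne_of_lt (getD_strictMono_aux0 hA h q.1.isLt))
      exact Prod.ext hq1 hq2
    · intro l hl
      rw [Finset.mem_erase] at hl
      obtain ⟨hlne, hlA⟩ := hl
      obtain ⟨s, hs, hse⟩ := getD_surj_aux0 hA (hdA l hlA)
      refine ⟨((⟨s, hs⟩ : Fin m), l.getLast hlne), ?_, ?_⟩
      · simp only [codeOfAux0, Finset.mem_filter, Finset.mem_univ, true_and]
        show (A.sort (· ≤ ·)).getD s [] ++ [l.getLast hlne] ∈ A
        rw [hse, List.dropLast_append_getLast hlne]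
        exact hlA
      · show (A.sort (· ≤ ·)).getD s [] ++ [l.getLast hlne] = l
        rw [hse, List.dropLast_append_getLast hlne]
  rw [hbij, Finset.card_erase_of_mem hnil, hA]

end AuxCode

section AuxGraph

lemma exists_encoding_aux0 {V : Type*} [Fintype V] [LinearOrder V] {K : ℕ} (hK : 1 ≤ K)
    (G : SimpleGraph V) [DecidableRel G.Adj] (hdeg : ∀ w : V, G.degree w ≤ K)
    (v : V) (m : ℕ) (S : Finset V) (hv : v ∈ S) (hcard : S.card = m)
    (hconn : (G.induce (S : Set V)).Connected) :
    ∃ A : Finset (List (Fin K)), A.card = m ∧ (∀ l ∈ A, l.dropLast ∈ A) ∧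
      A.image (fun l => l.foldl
        (fun w j => ((G.neighborFinset w).sort (· ≤ ·)).getD j.1 w) v) = S := by
  classical
  set step : V → Fin K → V :=
    fun w j => ((G.neighborFinset w).sort (· ≤ ·)).getD j.1 w with hstep
  set GS := G.induce (S : Set V) with hGS
  have hvS : v ∈ (S : Set V) := hv
  set v' : ↥(S : Set V) := ⟨v, hvS⟩ with hv'
  have hpar : ∀ u : ↥(S : Set V), ∃ w : ↥(S : Set V),
      u ≠ v' → (GS.Adj w u ∧ GS.dist v' w + 1 = GS.dist v' u) := by
    intro u
    by_cases hu : u = v'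
    · exact ⟨u, fun h => absurd hu h⟩
    · obtain ⟨p, hp⟩ := (hconn.preconnected v' u).exists_walk_length_eq_dist
      obtain ⟨w, hadj, q, hq⟩ := SimpleGraph.Walk.exists_eq_cons_of_ne hu p.reverse
      have hlen : q.length + 1 = GS.dist v' u := by
        have h1 : p.reverse.length = p.length := SimpleGraph.Walk.length_reverse p
        rw [hq] at h1
        simp only [SimpleGraph.Walk.length_cons] at h1
        omega
      have hd1 : GS.dist v' w ≤ q.length := by
        have := SimpleGraph.dist_le q.reverse
        rwa [SimpleGraph.Walk.length_reverse] at this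
      have hd2 : GS.dist v' u ≤ GS.dist v' w + 1 := by
        have htri : GS.dist v' u ≤ GS.dist v' w + GS.dist w u := hconn.dist_triangle
        have : GS.dist w u = 1 := SimpleGraph.dist_eq_one_iff_adj.2 hadj.symm
        omega
      exact ⟨w, fun _ => ⟨hadj.symm, by omega⟩⟩
  choose pr hpr using hpar
  have hdist_pr : ∀ u, u ≠ v' → GS.dist v' (pr u) + 1 = GS.dist v' u := fun u h => (hpr u h).2
  have hadj_pr : ∀ u, u ≠ v' → GS.Adj (pr u) u := fun u h => (hpr u h).1
  set slot : ↥(S : Set V) → Fin K := fun u =>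
    if h : (↑u : V) ∈ (G.neighborFinset ↑(pr u)).sort (· ≤ ·)
    then ⟨((G.neighborFinset ↑(pr u)).sort (· ≤ ·)).idxOf ↑u,
          lt_of_lt_of_le (List.idxOf_lt_length_iff.2 h)
            (by rw [Finset.length_sort]; exact hdeg _)⟩
    else ⟨0, hK⟩ with hslot
  set πAux : ℕ → ↥(S : Set V) → List (Fin K) :=
    fun n => Nat.rec (motive := fun _ => ↥(S : Set V) → List (Fin K))
      (fun _ => ([] : List (Fin K)))
      (fun _ ih u => if u = v' then [] else ih (pr u) ++ [slot u]) n with hπAux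
  set π : ↥(S : Set V) → List (Fin K) := fun u => πAux (GS.dist v' u) u with hπ
  have hπAux_succ : ∀ n u, πAux (n+1) u = if u = v' then [] else πAux n (pr u) ++ [slot u] :=
    fun n u => rfl
  have hπv : π v' = [] := by
    have h0 : GS.dist v' v' = 0 := SimpleGraph.dist_self
    show πAux (GS.dist v' v') v' = []
    rw [h0]
    rfl
  have hπ_ne : ∀ u, u ≠ v' → π u = π (pr u) ++ [slot u] := by
    intro u hu
    have hd := hdist_pr u hu
    show πAux (GS.dist v' u) u = πAux (GS.dist v' (pr u)) (pr u) ++ [slot u]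
    rw [← hd, hπAux_succ, if_neg hu]
  have hψπ : ∀ n, ∀ u, GS.dist v' u ≤ n → (π u).foldl step v = ↑u := by
    intro n
    induction n with
    | zero =>
      intro u hd
      have : u = v' := (hconn.dist_eq_zero_iff.mp (Nat.le_zero.mp hd)).symm
      subst this
      rw [hπv]
      rfl
    | succ n ih =>
      intro u hd
      by_cases hu : u = v'
      · subst hu; rw [hπv]; rfl
      · rw [hπ_ne u hu, List.foldl_append]
        have hdpr : GS.dist v' (pr u) ≤ n := by have := hdist_pr u hu; omega
        rw [ih (pr u) hdpr]
        show step (↑(pr u)) (slot u) = ↑u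
        have hadj : G.Adj ↑(pr u) ↑u := hadj_pr u hu
        have hmem : (↑u : V) ∈ (G.neighborFinset ↑(pr u)).sort (· ≤ ·) := by
          rw [Finset.mem_sort, SimpleGraph.mem_neighborFinset]; exact hadj
        simp only [hstep, hslot, dif_pos hmem]
        rw [List.getD_eq_getElem _ _ (List.idxOf_lt_length_iff.2 hmem)]
        exact List.getElem_idxOf _
  have hπinj : Function.Injective π := by
    intro a b h
    have ha := hψπ (GS.dist v' a) a le_rfl
    have hb := hψπ (GS.dist v' b) b le_rfl
    apply Subtype.ext
    rw [← ha, ← hb, h]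
  refine ⟨Finset.univ.image π, ?_, ?_, ?_⟩
  · rw [Finset.card_image_of_injective _ hπinj, Finset.card_univ]
    simp [hcard]
  · intro l hl
    rw [Finset.mem_image] at hl
    obtain ⟨u, _, rfl⟩ := hl
    by_cases hu : u = v'
    · subst hu
      rw [hπv]
      exact Finset.mem_image.2 ⟨v', Finset.mem_univ _, hπv⟩
    · rw [hπ_ne u hu, List.dropLast_concat]
      exact Finset.mem_image.2 ⟨pr u, Finset.mem_univ _, rfl⟩
  · rw [Finset.image_image]
    have hcomp : ((fun l => List.foldl step v l) ∘ π) = Subtype.val := by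
      funext u
      exact hψπ (GS.dist v' u) u le_rfl
    rw [hcomp]
    ext x
    simp

lemma count_aux0 {V : Type*} [Fintype V] [LinearOrder V] {K : ℕ} (hK : 1 ≤ K)
    (G : SimpleGraph V) [DecidableRel G.Adj] (hdeg : ∀ w : V, G.degree w ≤ K)
    (m : ℕ) (hm : 1 ≤ m) (v : V) :
    {S : Finset V | v ∈ S ∧ S.card = m ∧ (G.induce (S : Set V)).Connected}.ncard
      ≤ (m * K).choose (m - 1) := by
  classical
  set ψ := fun l : List (Fin K) =>
    l.foldl (fun w j => ((G.neighborFinset w).sort (· ≤ ·)).getD j.1 w) v with hψ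
  have key : ∀ S : Finset V, ∃ A : Finset (List (Fin K)),
      (v ∈ S ∧ S.card = m ∧ (G.induce (S : Set V)).Connected) →
      A.card = m ∧ (∀ l ∈ A, l.dropLast ∈ A) ∧ A.image ψ = S := by
    intro S
    by_cases h : v ∈ S ∧ S.card = m ∧ (G.induce (S : Set V)).Connected
    · obtain ⟨A, hA⟩ := exists_encoding_aux0 hK G hdeg v m S h.1 h.2.1 h.2.2
      exact ⟨A, fun _ => hA⟩
    · exact ⟨∅, fun h' => absurd h' h⟩
  choose F hF using key
  have hle : {S : Finset V | v ∈ S ∧ S.card = m ∧ (G.induce (S : Set V)).Connected}.ncard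
      ≤ (↑(Finset.univ.powersetCard (m-1) : Finset (Finset (Fin m × Fin K)))
          : Set (Finset (Fin m × Fin K))).ncard := by
    apply Set.ncard_le_ncard_of_injOn (fun S => codeOfAux0 m K (F S))
    · intro S hS
      simp only [Set.mem_setOf_eq] at hS
      obtain ⟨h1, h2, h3⟩ := hF S hS
      rw [Finset.mem_coe, Finset.mem_powersetCard_univ]
      exact codeOf_card_aux0 h1 h2 (by omega)
    · intro S1 hS1 S2 hS2 heq
      simp only [Set.mem_setOf_eq] at hS1 hS2
      obtain ⟨a1, d1, i1⟩ := hF S1 hS1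
      obtain ⟨a2, d2, i2⟩ := hF S2 hS2
      have : F S1 = F S2 := codeOf_inj_aux0 a1 a2 d1 d2 heq
      rw [← i1, ← i2, this]
  calc _ ≤ _ := hle
    _ = ((Finset.univ.powersetCard (m-1) : Finset (Finset (Fin m × Fin K)))).card :=
        Set.ncard_coe_finset _
    _ = (m * K).choose (m - 1) := by
        rw [Finset.card_powersetCard, Finset.card_univ]
        simp [Fintype.card_prod]

end AuxGraph

/-- Let `G` be a simple graph on a vertex set of size `p` whose maximum
degree is at most `K`, where `K ≥ 1`. Then for every integer `m ≥ 1`: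
(a) for any fixed vertex `v`, the number of vertex subsets `S` with `v ∈ S`, `|S| = m`,
and induced subgraph `G[S]` connected is at most `(eK)^m`; and
(b) the total number of vertex subsets `S` with `|S| = m` and `G[S]` connected is at most
`p·(eK)^m`. -/
theorem connected_subgraph_count_of_bounded_degree
    (V : Type*) [Fintype V] [DecidableEq V] (p K : ℕ) (hK : 1 ≤ K)
    (hp : Fintype.card V = p) (G : SimpleGraph V) [DecidableRel G.Adj]
    (hdeg : ∀ v : V, G.degree v ≤ K) (m : ℕ) (hm : 1 ≤ m) :
    (∀ v : V,
      (({S : Finset V | v ∈ S ∧ S.card = m ∧ (G.induce (S : Set V)).Connected}.ncard : ℝ)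
        ≤ (Real.exp 1 * K) ^ m)) ∧
    (({S : Finset V | S.card = m ∧ (G.induce (S : Set V)).Connected}.ncard : ℝ)
        ≤ p * (Real.exp 1 * K) ^ m) := by
  classical
  letI : LinearOrder V := LinearOrder.lift' (Fintype.equivFin V) (Fintype.equivFin V).injective
  have hchoose := choose_le_exp_mul_pow_aux0 m K hm hK
  have parta : ∀ v : V,
      (({S : Finset V | v ∈ S ∧ S.card = m ∧ (G.induce (S : Set V)).Connected}.ncard : ℝ)
        ≤ (Real.exp 1 * K) ^ m) := by
    intro v
    have h1 := count_aux0 hK G hdeg m hm v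
    calc ({S : Finset V | v ∈ S ∧ S.card = m ∧ (G.induce (S : Set V)).Connected}.ncard : ℝ)
        ≤ (((m * K).choose (m-1) : ℕ) : ℝ) := by exact_mod_cast h1
      _ ≤ (Real.exp 1 * K) ^ m := hchoose
  refine ⟨parta, ?_⟩
  -- part (b)
  have hbig : {S : Finset V | S.card = m ∧ (G.induce (S : Set V)).Connected}.ncard
      ≤ ∑ v : V, {S : Finset V | v ∈ S ∧ S.card = m ∧ (G.induce (S : Set V)).Connected}.ncard := by
    have h1 : {S : Finset V | S.card = m ∧ (G.induce (S : Set V)).Connected}.toFinset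
        ⊆ Finset.univ.biUnion
          (fun v : V => {S : Finset V | v ∈ S ∧ S.card = m ∧
            (G.induce (S : Set V)).Connected}.toFinset) := by
      intro S hS
      rw [Set.mem_toFinset] at hS
      have hpos : 0 < S.card := by rw [hS.1]; omega
      obtain ⟨v, hv⟩ := Finset.card_pos.1 hpos
      exact Finset.mem_biUnion.2 ⟨v, Finset.mem_univ _, Set.mem_toFinset.2 ⟨hv, hS⟩⟩
    calc {S : Finset V | S.card = m ∧ (G.induce (S : Set V)).Connected}.ncard
        = {S : Finset V | S.card = m ∧ (G.induce (S : Set V)).Connected}.toFinset.card :=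
          Set.ncard_eq_toFinset_card' _
      _ ≤ (Finset.univ.biUnion
          (fun v : V => {S : Finset V | v ∈ S ∧ S.card = m ∧
            (G.induce (S : Set V)).Connected}.toFinset)).card := Finset.card_le_card h1
      _ ≤ ∑ v : V, {S : Finset V | v ∈ S ∧ S.card = m ∧
            (G.induce (S : Set V)).Connected}.toFinset.card := Finset.card_biUnion_le
      _ = ∑ v : V, {S : Finset V | v ∈ S ∧ S.card = m ∧
            (G.induce (S : Set V)).Connected}.ncard := by
          apply Finset.sum_congr rfl
          intro v _
          exact (Set.ncard_eq_toFinset_card' _).symm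
  have hpow_nonneg : (0:ℝ) ≤ (Real.exp 1 * K) ^ m := by positivity
  calc ({S : Finset V | S.card = m ∧ (G.induce (S : Set V)).Connected}.ncard : ℝ)
      ≤ (∑ v : V, {S : Finset V | v ∈ S ∧ S.card = m ∧
          (G.induce (S : Set V)).Connected}.ncard : ℕ) := by exact_mod_cast hbig
    _ = ∑ v : V, ({S : Finset V | v ∈ S ∧ S.card = m ∧
          (G.induce (S : Set V)).Connected}.ncard : ℝ) := by push_cast; rfl
    _ ≤ ∑ _v : V, (Real.exp 1 * K) ^ m := Finset.sum_le_sum (fun v _ => parta v)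
    _ = (Fintype.card V : ℝ) * (Real.exp 1 * K) ^ m := by
        rw [Finset.sum_const, Finset.card_univ, nsmul_eq_mul]
    _ = p * (Real.exp 1 * K) ^ m := by rw [hp]
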